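/- For every complete N-invariant flag F, the subspaces F'_i := (F_i ∩ P) + π_Q(F_i), where π_Q : V → Q is the projection onto Q along P, form a torus-fixed complete N-invariant flag; consequently F' = Φ(w) for a unique weight sequence w. -/

import Mathlib

open Module

namespace Springer

/-- The nilpotent endomorphism `N` of `ℂ^n` with two Jordan blocks of sizes `n-k` and `k`:
the basis vectors `e 0, …, e (n-k-1)` are `p 1, …, p (n-k)` and
`e (n-k), …, e (n-1)` are `q 1, …, q k`; `N` shifts each block down by one. -/
def Nmap (n k : ℕ) : (Fin n → ℂ) →ₗ[ℂ] (Fin n → ℂ) where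
  toFun x j := if h : j.val + 1 < n ∧ j.val + 1 ≠ n - k then x ⟨j.val + 1, h.1⟩ else 0
  map_add' x y := by
    funext j
    by_cases h : j.val + 1 < n ∧ j.val + 1 ≠ n - k <;> simp [h]
  map_smul' c x := by
    funext j
    by_cases h : j.val + 1 < n ∧ j.val + 1 ≠ n - k <;> simp [h]

/-- `span (p 1, …, p t, q 1, …, q b)` inside `ℂ^n`. -/
noncomputable def spanPQ (n k t b : ℕ) : Submodule ℂ (Fin n → ℂ) :=
  Submodule.span ℂ {x | ∃ j : Fin n,
    ((j.val < t ∧ j.val < n - k) ∨ (n - k ≤ j.val ∧ j.val < n - k + b)) ∧ x = Pi.single j 1}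

/-- `P = span (p 1, …, p (n-k))`. -/
noncomputable def Pmod (n k : ℕ) : Submodule ℂ (Fin n → ℂ) := spanPQ n k (n - k) 0

/-- `Q = span (q 1, …, q k)`. -/
noncomputable def Qmod (n k : ℕ) : Submodule ℂ (Fin n → ℂ) := spanPQ n k 0 k

/-- The projection of `V` onto `Q` along `P`. -/
def projQ (n k : ℕ) : (Fin n → ℂ) →ₗ[ℂ] (Fin n → ℂ) where
  toFun x j := if n - k ≤ j.val then x j else 0
  map_add' x y := by
    funext j
    by_cases h : n - k ≤ j.val
    · simp only [Pi.add_apply, if_pos h]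
    · simp only [Pi.add_apply, if_neg h, add_zero]
  map_smul' c x := by
    funext j
    by_cases h : n - k ≤ j.val
    · simp only [Pi.smul_apply, smul_eq_mul, if_pos h, RingHom.id_apply]
    · simp only [Pi.smul_apply, smul_eq_mul, if_neg h, mul_zero, RingHom.id_apply]

/-- A complete `N`-invariant flag in `ℂ^n`: a chain `F 0 ⊆ ⋯ ⊆ F n` with `dim F i = i`
(thus `F 0 = 0` and `F n = V`) and `N (F (i+1)) ⊆ F i`. -/
def IsNFlag (n k : ℕ) (F : Fin (n + 1) → Submodule ℂ (Fin n → ℂ)) : Prop :=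
  Monotone F ∧ (∀ i : Fin (n + 1), finrank ℂ (F i) = i.val) ∧
    ∀ i : Fin n, Submodule.map (Nmap n k) (F i.succ) ≤ F i.castSucc

/-- A flag is torus fixed if each subspace is spanned by its intersections with `P` and `Q`. -/
def TorusFixed (n k : ℕ) (F : Fin (n + 1) → Submodule ℂ (Fin n → ℂ)) : Prop :=
  ∀ i, F i = (F i ⊓ Pmod n k) ⊔ (F i ⊓ Qmod n k)

/-- A weight sequence (row-strict tableau) of shape `(n-k, k)`:
`true` encodes `∨` and `false` encodes `∧`; there are exactly `k` symbols `∨`. -/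
def IsWeightSeq (n k : ℕ) (w : Fin n → Bool) : Prop :=
  (Finset.univ.filter fun i => w i = true).card = k

/-- `t i` = number of 1-based positions `≤ i` labelled `∧`. -/
def tcount (n : ℕ) (w : Fin n → Bool) (i : ℕ) : ℕ :=
  (Finset.univ.filter fun j : Fin n => j.val < i ∧ w j = false).card

/-- `b i` = number of 1-based positions `≤ i` labelled `∨`. -/
def bcount (n : ℕ) (w : Fin n → Bool) (i : ℕ) : ℕ :=
  (Finset.univ.filter fun j : Fin n => j.val < i ∧ w j = true).card

/-- The torus fixed flag `Φ(w)` attached to a weight sequence `w`: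
`Φ(w) i = span (p 1, …, p (t i), q 1, …, q (b i))`. -/
noncomputable def PhiFlag (n k : ℕ) (w : Fin n → Bool) : Fin (n + 1) → Submodule ℂ (Fin n → ℂ) :=
  fun i => spanPQ n k (tcount n w i.val) (bcount n w i.val)

/-- A crossingless matching on the points `1, …, n`: a set of cups `(i, j)` with
`1 ≤ i < j ≤ n`, pairwise disjoint, mutually non-crossing, and such that no unmatched
point (ray) lies strictly inside any cup. -/
structure CrossinglessMatching (n : ℕ) where
  cups : Finset (ℕ × ℕ)
  mem_range : ∀ p ∈ cups, 1 ≤ p.1 ∧ p.1 < p.2 ∧ p.2 ≤ n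
  disjoint' : ∀ p ∈ cups, ∀ q ∈ cups, p ≠ q →
    p.1 ≠ q.1 ∧ p.1 ≠ q.2 ∧ p.2 ≠ q.1 ∧ p.2 ≠ q.2
  noncross : ∀ p ∈ cups, ∀ q ∈ cups, ¬(p.1 < q.1 ∧ q.1 < p.2 ∧ p.2 < q.2)
  rays_outside : ∀ p ∈ cups, ∀ m : ℕ, p.1 < m → m < p.2 → ∃ q ∈ cups, m = q.1 ∨ m = q.2

/-- The point `m ∈ {1, …, n}` is matched (lies on a cup) in `C`. -/
def Matched (n : ℕ) (C : CrossinglessMatching n) (m : ℕ) : Prop :=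
  ∃ p ∈ C.cups, m = p.1 ∨ m = p.2

/-- A standard tableau of shape `(n-k, k)`: a filling of the two-row Young diagram by
the numbers `1, …, n`, each used exactly once, with rows and columns strictly
decreasing read from the top left. -/
structure StandardTableau (n k : ℕ) where
  top : Fin (n - k) → ℕ
  bot : Fin k → ℕ
  top_strict : ∀ i j : Fin (n - k), i < j → top j < top i
  bot_strict : ∀ i j : Fin k, i < j → bot j < bot i
  col_strict : ∀ (i : Fin (n - k)) (j : Fin k), i.val = j.val → bot j < top i
  mem_iff : ∀ m : ℕ, (1 ≤ m ∧ m ≤ n) ↔ ((∃ i, top i = m) ∨ (∃ j, bot j = m))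
  top_ne_bot : ∀ (i : Fin (n - k)) (j : Fin k), top i ≠ bot j

/-- `C` is the crossingless matching `m(S)` associated with the standard tableau `S`:
it has `k` cups and its left cup endpoints are exactly the bottom-row entries of `S`. -/
def IsMatchOf (n k : ℕ) (S : StandardTableau n k) (C : CrossinglessMatching n) : Prop :=
  C.cups.card = k ∧ ∀ m : ℕ, (∃ p ∈ C.cups, p.1 = m) ↔ ∃ j, S.bot j = m

/-- The weight sequence of a standard tableau: `∨` (i.e. `true`) exactly on the
bottom-row entries. -/
def tabWeight (n k : ℕ) (S : StandardTableau n k) : Fin n → Bool :=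
  fun j => decide (∃ i, S.bot i = j.val + 1)

/-- The cup conditions cutting out `Y_S`: for every cup `(i, σ i)` of the matching,
`N ^ δ i (F (σ i)) = F (i - 1)` where `δ i = (σ i - i + 1)/2`. -/
def CupCond (n k : ℕ) (C : CrossinglessMatching n)
    (F : Fin (n + 1) → Submodule ℂ (Fin n → ℂ)) : Prop :=
  ∀ p ∈ C.cups, ∀ (h1 : p.1 - 1 < n + 1) (h2 : p.2 < n + 1),
    Submodule.map ((Nmap n k) ^ ((p.2 - p.1 + 1) / 2)) (F ⟨p.2, h2⟩) = F ⟨p.1 - 1, h1⟩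

/-- The ray conditions cutting out `Y_S` (for the weight sequence of `S`): for every
ray `m` of the matching, `F m = (N ^ b m)⁻¹ (range (N ^ (n - k - t m + b m)))`. -/
def RayCond (n k : ℕ) (w : Fin n → Bool) (C : CrossinglessMatching n)
    (F : Fin (n + 1) → Submodule ℂ (Fin n → ℂ)) : Prop :=
  ∀ m : ℕ, 1 ≤ m → ∀ hm : m < n + 1, ¬ Matched n C m →
    F ⟨m, hm⟩ = Submodule.comap ((Nmap n k) ^ (bcount n w m))
      (LinearMap.range ((Nmap n k) ^ (n - k - tcount n w m + bcount n w m)))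

/-- Membership in the (Spaltenstein–Vargas–Fung) component `Y_S`, where `C = m(S)`. -/
def InYS (n k : ℕ) (S : StandardTableau n k) (C : CrossinglessMatching n)
    (F : Fin (n + 1) → Submodule ℂ (Fin n → ℂ)) : Prop :=
  IsNFlag n k F ∧ CupCond n k C F ∧ RayCond n k (tabWeight n k S) C F

/-- The weight sequence `v` orients the crossingless matching `C`: opposite labels at
the two endpoints of every cup, and `∧` at every ray. -/
def OrientsMatching (n : ℕ) (v : Fin n → Bool) (C : CrossinglessMatching n) : Prop :=
  (∀ p ∈ C.cups, ∀ (h1 : p.1 - 1 < n) (h2 : p.2 - 1 < n),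
      v ⟨p.1 - 1, h1⟩ ≠ v ⟨p.2 - 1, h2⟩) ∧
  (∀ m : ℕ, 1 ≤ m → m ≤ n → ¬ Matched n C m → ∀ h : m - 1 < n, v ⟨m - 1, h⟩ = false)

/-- `C` is the matching `m(w)` produced from the weight sequence `w` by repeatedly
joining a pair `i < j` with `w i = ∨`, `w j = ∧` and all points strictly between them
already matched, until no such pair remains. -/
def IsMw (n : ℕ) (w : Fin n → Bool) (C : CrossinglessMatching n) : Prop :=
  (∀ p ∈ C.cups, ∀ (h1 : p.1 - 1 < n) (h2 : p.2 - 1 < n),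
      w ⟨p.1 - 1, h1⟩ = true ∧ w ⟨p.2 - 1, h2⟩ = false) ∧
  ¬ ∃ i j : ℕ, 1 ≤ i ∧ i < j ∧ j ≤ n ∧ ¬ Matched n C i ∧ ¬ Matched n C j ∧
      (∀ h : i - 1 < n, w ⟨i - 1, h⟩ = true) ∧ (∀ h : j - 1 < n, w ⟨j - 1, h⟩ = false) ∧
      (∀ m : ℕ, i < m → m < j → Matched n C m)

/-- `Cw` is the completed matching `C(w)`: a crossingless matching with `k` cups
containing `m(w) = Cm` on whose every cup `w` puts opposite labels. -/
def IsCw (n k : ℕ) (w : Fin n → Bool) (Cm Cw : CrossinglessMatching n) : Prop :=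
  Cm.cups ⊆ Cw.cups ∧ Cw.cups.card = k ∧
  ∀ p ∈ Cw.cups, ∀ (h1 : p.1 - 1 < n) (h2 : p.2 - 1 < n),
    w ⟨p.1 - 1, h1⟩ ≠ w ⟨p.2 - 1, h2⟩

/-- Membership in the closed attracting set `St(w)`, where `S = S(w)` and `Cw = C(w)`:
a flag of `Y_{S(w)}` such that `F i = Φ(w) i` for every `i` with `w i = ∧` which is a
left cup endpoint of `C(w)`. -/
def InSt (n k : ℕ) (w : Fin n → Bool) (S : StandardTableau n k)
    (Cw : CrossinglessMatching n) (F : Fin (n + 1) → Submodule ℂ (Fin n → ℂ)) : Prop :=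
  InYS n k S Cw F ∧
  ∀ i : ℕ, ∀ hi : i < n + 1, (∀ h : i - 1 < n, w ⟨i - 1, h⟩ = false) →
    (∃ p ∈ Cw.cups, p.1 = i) → F ⟨i, hi⟩ = PhiFlag n k w ⟨i, hi⟩

/-- The generating relation of `∼_C`: `a ∼ σ(a+1)` whenever `a+1` is a left cup
endpoint of `C`. -/
def cupRel (n : ℕ) (C : CrossinglessMatching n) (a b : ℕ) : Prop :=
  ∃ p ∈ C.cups, p.1 = a + 1 ∧ p.2 = b

/-- The equivalence relation `∼_C` on `{0, 1, …, n}`. -/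
def simRel (n : ℕ) (C : CrossinglessMatching n) : ℕ → ℕ → Prop :=
  Relation.EqvGen (cupRel n C)

/-- The equivalence relation `≈_{C,D}` on `{0, 1, …, n}` generated by `∼_C` and `∼_D`. -/
def approxRel (n : ℕ) (C D : CrossinglessMatching n) : ℕ → ℕ → Prop :=
  Relation.EqvGen (fun a b => cupRel n C a b ∨ cupRel n D a b)

/-- Adjacency in the glued diagram `D̄C`: `i` and `j` are joined by a cup of `C` or of `D`. -/
def Adj (n : ℕ) (C D : CrossinglessMatching n) (i j : ℕ) : Prop :=
  (i, j) ∈ C.cups ∨ (j, i) ∈ C.cups ∨ (i, j) ∈ D.cups ∨ (j, i) ∈ D.cups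

/-- Lying in the same connected component of the glued diagram `D̄C`. -/
def Conn (n : ℕ) (C D : CrossinglessMatching n) : ℕ → ℕ → Prop :=
  Relation.EqvGen (Adj n C D)

/-- The component of `v` in the glued diagram is a circle: every vertex of the
component is matched both in `C` and in `D`. -/
def IsCircleComp (n : ℕ) (C D : CrossinglessMatching n) (v : ℕ) : Prop :=
  ∀ u, Conn n C D u v → Matched n C u ∧ Matched n D u

/-- `v` is the leftmost vertex of its connected component (circle or line) of the
glued diagram. -/
def IsLeftmost (n : ℕ) (C D : CrossinglessMatching n) (v : ℕ) : Prop :=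
  1 ≤ v ∧ v ≤ n ∧ ∀ u, 1 ≤ u → Conn n C D u v → v ≤ u

/-- An orientation of the glued diagram `D̄C` (with `C = m(w)` and `D = m(w')`):
a weight sequence assigning opposite labels to the endpoints of every cup of `C` and
of `D`, agreeing with `w` at every ray of `C` and with `w'` at every ray of `D`. -/
def OrientsGlued (n k : ℕ) (w w' : Fin n → Bool) (C D : CrossinglessMatching n)
    (v : Fin n → Bool) : Prop :=
  IsWeightSeq n k v ∧
  (∀ p ∈ C.cups, ∀ (h1 : p.1 - 1 < n) (h2 : p.2 - 1 < n),
      v ⟨p.1 - 1, h1⟩ ≠ v ⟨p.2 - 1, h2⟩) ∧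
  (∀ p ∈ D.cups, ∀ (h1 : p.1 - 1 < n) (h2 : p.2 - 1 < n),
      v ⟨p.1 - 1, h1⟩ ≠ v ⟨p.2 - 1, h2⟩) ∧
  (∀ i : Fin n, ¬ Matched n C (i.val + 1) → v i = w i) ∧
  (∀ i : Fin n, ¬ Matched n D (i.val + 1) → v i = w' i)

/-- The component of `v0` in the glued diagram is orientable: it admits a labeling of
its vertices by `∧, ∨`, opposite across every edge, agreeing with `w` at every vertex
which is a ray of `C` and with `w'` at every vertex which is a ray of `D`. -/
def ComponentOrientable (n : ℕ) (w w' : Fin n → Bool) (C D : CrossinglessMatching n)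
    (v0 : ℕ) : Prop :=
  ∃ g : ℕ → Bool,
    (∀ i j, Conn n C D i v0 → Adj n C D i j → g i ≠ g j) ∧
    (∀ i, Conn n C D i v0 → 1 ≤ i → i ≤ n → ¬ Matched n C i →
      ∀ h : i - 1 < n, g i = w ⟨i - 1, h⟩) ∧
    (∀ i, Conn n C D i v0 → 1 ≤ i → i ≤ n → ¬ Matched n D i →
      ∀ h : i - 1 < n, g i = w' ⟨i - 1, h⟩)

/-- A walk in the glued multigraph `D̄C` from `a` to `b`: a list of edges, each tagged
by `true` (an edge of `C`) or `false` (an edge of `D`), consecutively incident. -/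
def IsGluedWalk (n : ℕ) (C D : CrossinglessMatching n) : ℕ → ℕ → List (Bool × ℕ × ℕ) → Prop
  | a, b, [] => a = b
  | a, b, e :: es =>
      (if e.1 = true then (e.2.1, e.2.2) ∈ C.cups else (e.2.1, e.2.2) ∈ D.cups) ∧
      ((a = e.2.1 ∧ IsGluedWalk n C D e.2.2 b es) ∨ (a = e.2.2 ∧ IsGluedWalk n C D e.2.1 b es))

/-- The standard flag of `ℂ^n`. -/
noncomputable def stdFlag (n k : ℕ) : Fin (n + 1) → Submodule ℂ (Fin n → ℂ) :=
  fun i => spanPQ n k (min i.val (n - k)) (i.val - (n - k))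


/-! ### Auxiliary material for `limit_flag_is_fixed` -/

section LimitAux

open Finset

/-- Coordinate submodule: vectors supported on `{j | s j}`. -/
noncomputable def coordSub (n : ℕ) (s : ℕ → Prop) : Submodule ℂ (Fin n → ℂ) where
  carrier := {x | ∀ j : Fin n, ¬ s j.val → x j = 0}
  add_mem' := by intro x y hx hy j hj; simp [hx j hj, hy j hj]
  zero_mem' := by intro j hj; rfl
  smul_mem' := by intro c x hx j hj; simp [hx j hj]

lemma mem_coordSub {n : ℕ} {s : ℕ → Prop} {x : Fin n → ℂ} :
    x ∈ coordSub n s ↔ ∀ j : Fin n, ¬ s j.val → x j = 0 := Iff.rfl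

lemma coordSub_congr {n : ℕ} {s t : ℕ → Prop} (h : ∀ m, m < n → (s m ↔ t m)) :
    coordSub n s = coordSub n t := by
  ext x
  simp only [mem_coordSub]
  constructor
  · intro hx j hj
    exact hx j (fun hs => hj ((h j.val j.isLt).mp hs))
  · intro hx j hj
    exact hx j (fun ht => hj ((h j.val j.isLt).mpr ht))

lemma coordSub_inf {n : ℕ} (s t : ℕ → Prop) :
    coordSub n s ⊓ coordSub n t = coordSub n (fun m => s m ∧ t m) := by
  ext x
  simp only [Submodule.mem_inf, mem_coordSub]
  constructor
  · rintro ⟨h1, h2⟩ j hj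
    by_cases hs : s j.val
    · exact h2 j (fun ht => hj ⟨hs, ht⟩)
    · exact h1 j hs
  · intro h
    exact ⟨fun j hj => h j (fun hc => hj hc.1), fun j hj => h j (fun hc => hj hc.2)⟩

/-- `coordSub n s` is linearly equivalent to functions on `{j | s j}`. -/
noncomputable def coordEquiv (n : ℕ) (s : ℕ → Prop) [DecidablePred s] :
    coordSub n s ≃ₗ[ℂ] ({j : Fin n // s j.val} → ℂ) where
  toFun x j := x.1 j.1
  map_add' x y := rfl
  map_smul' c x := rfl
  invFun y := ⟨fun j => if h : s j.val then y ⟨j, h⟩ else 0, fun j hj => dif_neg hj⟩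
  left_inv x := by
    apply Subtype.ext; funext j
    change (if h : s j.val then x.1 j else 0) = x.1 j
    by_cases h : s j.val
    · exact dif_pos h
    · rw [dif_neg h, x.2 j h]
  right_inv y := by
    funext j
    exact dif_pos j.2

lemma card_filter_val (n : ℕ) (q : ℕ → Prop) [DecidablePred q] :
    (Finset.univ.filter fun j : Fin n => q j.val).card = ((Finset.range n).filter q).card := by
  apply Finset.card_bij (fun j _ => j.val)
  · intro j hj
    simp only [mem_filter, mem_range]
    exact ⟨j.isLt, (mem_filter.mp hj).2⟩
  · intro a _ b _ hab
    exact Fin.val_injective hab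
  · intro m hm
    simp only [mem_filter, mem_range] at hm
    exact ⟨⟨m, hm.1⟩, by simp [hm.2], rfl⟩

lemma finrank_coordSub (n : ℕ) (s : ℕ → Prop) [DecidablePred s] :
    finrank ℂ (coordSub n s) = ((Finset.range n).filter s).card := by
  rw [(coordEquiv n s).finrank_eq, Module.finrank_pi, Fintype.card_subtype, card_filter_val]

end LimitAux

section LimitAux2

open Finset

lemma Nmap_apply (n k : ℕ) (x : Fin n → ℂ) (j : Fin n) :
    Nmap n k x j = if h : j.val + 1 < n ∧ j.val + 1 ≠ n - k then x ⟨j.val + 1, h.1⟩ else 0 := rfl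

lemma projQ_apply (n k : ℕ) (x : Fin n → ℂ) (j : Fin n) :
    projQ n k x j = if n - k ≤ j.val then x j else 0 := rfl

lemma Nmap_pow_apply (n k d : ℕ) (x : Fin n → ℂ) (j : Fin n) :
    ((Nmap n k ^ d) x) j =
      if h : j.val + d < n ∧ (j.val + d < n - k ∨ n - k ≤ j.val) then x ⟨j.val + d, h.1⟩
      else 0 := by
  induction d generalizing x with
  | zero =>
      rw [pow_zero, dif_pos ⟨j.isLt, by omega⟩]
      rfl
  | succ d ih =>
      rw [pow_succ, Module.End.mul_apply, ih (Nmap n k x)]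
      by_cases h1 : j.val + d < n ∧ (j.val + d < n - k ∨ n - k ≤ j.val)
      · rw [dif_pos h1, Nmap_apply]
        by_cases h2 : j.val + d + 1 < n ∧ j.val + d + 1 ≠ n - k
        · rw [dif_pos h2, dif_pos ⟨show j.val + (d + 1) < n by omega, by omega⟩]
          rfl
        · rw [dif_neg h2, dif_neg (by omega)]
      · rw [dif_neg h1, dif_neg (by omega)]

lemma spanPQ_eq (n k t b : ℕ) :
    spanPQ n k t b
      = coordSub n (fun m => (m < t ∧ m < n - k) ∨ (n - k ≤ m ∧ m < n - k + b)) := by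
  apply le_antisymm
  · rw [spanPQ, Submodule.span_le]
    rintro x ⟨j, hj, rfl⟩
    intro j' hj'
    have hne : j' ≠ j := by rintro rfl; exact hj' hj
    exact Pi.single_eq_of_ne hne 1
  · intro x hx
    rw [← Finset.univ_sum_single x]
    apply Submodule.sum_mem
    intro j _
    by_cases h : (j.val < t ∧ j.val < n - k) ∨ (n - k ≤ j.val ∧ j.val < n - k + b)
    · have h1 : Pi.single j (x j) = x j • (Pi.single j 1 : Fin n → ℂ) := by
        rw [← Pi.single_smul, smul_eq_mul, mul_one]
      rw [h1]
      apply Submodule.smul_mem _ _ (Submodule.subset_span _)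
      exact ⟨j, h, rfl⟩
    · rw [hx j h]
      simp

lemma spanPQ_sup (n k t b : ℕ) : spanPQ n k t 0 ⊔ spanPQ n k 0 b = spanPQ n k t b := by
  rw [spanPQ, spanPQ, spanPQ, ← Submodule.span_union]
  congr 1
  ext x
  simp only [Set.mem_union, Set.mem_setOf_eq]
  constructor
  · rintro (⟨j, hj, rfl⟩ | ⟨j, hj, rfl⟩) <;> exact ⟨j, by omega, rfl⟩
  · rintro ⟨j, hj, rfl⟩
    by_cases hc : j.val < t ∧ j.val < n - k
    · exact Or.inl ⟨j, by omega, rfl⟩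
    · exact Or.inr ⟨j, by omega, rfl⟩

lemma Pmod_eq (n k : ℕ) : Pmod n k = coordSub n (fun m => m < n - k) := by
  rw [Pmod, spanPQ_eq]
  exact coordSub_congr (fun m hm => by omega)

lemma Qmod_eq (n k : ℕ) (hk : k ≤ n) : Qmod n k = coordSub n (fun m => n - k ≤ m) := by
  rw [Qmod, spanPQ_eq]
  exact coordSub_congr (fun m hm => by omega)

lemma ker_projQ (n k : ℕ) : LinearMap.ker (projQ n k) = Pmod n k := by
  rw [Pmod_eq]
  ext x
  simp only [LinearMap.mem_ker, mem_coordSub]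
  constructor
  · intro h j hj
    have h2 := congrFun h j
    rwa [projQ_apply, if_pos (by omega), Pi.zero_apply] at h2
  · intro h
    funext j
    rw [projQ_apply, Pi.zero_apply]
    split_ifs with hj
    · exact h j (by omega)
    · rfl

lemma map_projQ_le_Qmod (n k : ℕ) (hk : k ≤ n) (W : Submodule ℂ (Fin n → ℂ)) :
    Submodule.map (projQ n k) W ≤ Qmod n k := by
  rw [Qmod_eq n k hk]
  rintro _ ⟨x, -, rfl⟩ j hj
  rw [projQ_apply, if_neg hj]

lemma map_Nmap_Pmod_le (n k : ℕ) : Submodule.map (Nmap n k) (Pmod n k) ≤ Pmod n k := by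
  rw [Pmod_eq]
  rintro _ ⟨x, hx, rfl⟩ j hj
  rw [Nmap_apply]
  split_ifs with h
  · exact hx ⟨j.val + 1, h.1⟩ (show ¬ j.val + 1 < n - k by omega)
  · rfl

lemma projQ_comm (n k : ℕ) : (projQ n k) ∘ₗ (Nmap n k) = (Nmap n k) ∘ₗ (projQ n k) := by
  apply LinearMap.ext
  intro x
  funext j
  simp only [LinearMap.comp_apply, projQ_apply, Nmap_apply]
  split_ifs <;> first | rfl | omega

lemma map_swap (n k : ℕ) (W : Submodule ℂ (Fin n → ℂ)) :
    Submodule.map (Nmap n k) (Submodule.map (projQ n k) W)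
      = Submodule.map (projQ n k) (Submodule.map (Nmap n k) W) := by
  rw [← Submodule.map_comp, ← projQ_comm, Submodule.map_comp]

end LimitAux2

section LimitAux3

open Finset

lemma nilpotent_bound (n k : ℕ) (W : Submodule ℂ (Fin n → ℂ))
    (hinv : Submodule.map (Nmap n k) W ≤ W) :
    ∀ x ∈ W, (Nmap n k ^ finrank ℂ W) x = 0 := by
  intro x hx
  have hmem : ∀ y ∈ W, Nmap n k y ∈ W := fun y hy => hinv ⟨y, hy, rfl⟩
  have hd : finrank ℂ W ≤ n := by
    have h1 := Submodule.finrank_le W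
    rwa [Module.finrank_pi, Fintype.card_fin] at h1
  have hker : LinearMap.ker ((Nmap n k).restrict hmem ^ n)
      = LinearMap.ker ((Nmap n k).restrict hmem ^ finrank ℂ W) :=
    Module.End.ker_pow_eq_ker_pow_finrank_of_le hd
  have hxn : (⟨x, hx⟩ : W) ∈ LinearMap.ker ((Nmap n k).restrict hmem ^ n) := by
    rw [LinearMap.mem_ker]
    apply Subtype.ext
    rw [Module.End.pow_restrict, LinearMap.restrict_apply]
    show (Nmap n k ^ n) x = (0 : W).val
    funext j
    rw [Nmap_pow_apply, dif_neg (by omega)]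
    rfl
  rw [hker, LinearMap.mem_ker] at hxn
  have h2 := congrArg Subtype.val hxn
  rwa [Module.End.pow_restrict, LinearMap.restrict_apply] at h2

lemma Npow_support (n k d : ℕ) (x : Fin n → ℂ) (hx : (Nmap n k ^ d) x = 0) (j : Fin n)
    (h1 : d ≤ j.val) (h2 : j.val < n - k ∨ (n - k ≤ j.val ∧ n - k + d ≤ j.val)) :
    x j = 0 := by
  have hlt : j.val - d < n := by omega
  have h0 : ((Nmap n k ^ d) x) ⟨j.val - d, hlt⟩ = 0 := by rw [hx]; rfl
  have hcond : (⟨j.val - d, hlt⟩ : Fin n).val + d < n ∧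
      ((⟨j.val - d, hlt⟩ : Fin n).val + d < n - k ∨ n - k ≤ (⟨j.val - d, hlt⟩ : Fin n).val) :=
    ⟨show j.val - d + d < n by omega, show j.val - d + d < n - k ∨ n - k ≤ j.val - d by omega⟩
  rw [Nmap_pow_apply, dif_pos hcond] at h0
  have hjeq : (⟨(⟨j.val - d, hlt⟩ : Fin n).val + d, hcond.1⟩ : Fin n) = j :=
    Fin.ext (show j.val - d + d = j.val by omega)
  rwa [hjeq] at h0

lemma block_P (n k : ℕ) (W : Submodule ℂ (Fin n → ℂ)) (hW : W ≤ Pmod n k)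
    (hinv : Submodule.map (Nmap n k) W ≤ W) :
    finrank ℂ W ≤ n - k ∧ W = spanPQ n k (finrank ℂ W) 0 := by
  classical
  set d := finrank ℂ W with hd
  have hle : W ≤ coordSub n (fun m => m < min d (n - k)) := by
    intro x hx j hj
    by_cases hjk : j.val < n - k
    · exact Npow_support n k d x (nilpotent_bound n k W hinv x hx) j (by omega) (by omega)
    · rw [Pmod_eq] at hW
      exact hW hx j hjk
  have hcard : finrank ℂ (coordSub n (fun m => m < min d (n - k))) = min d (n - k) := by
    rw [finrank_coordSub]
    have he : (Finset.range n).filter (fun m => m < min d (n - k))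
        = Finset.range (min d (n - k)) := by
      ext m
      simp only [Finset.mem_filter, Finset.mem_range]
      have hdn : d ≤ n := by
        have h1 := Submodule.finrank_le W
        rwa [Module.finrank_pi, Fintype.card_fin] at h1
      omega
    rw [he, Finset.card_range]
  have hdle : d ≤ n - k := by
    have h1 := Submodule.finrank_mono hle
    rw [hcard] at h1
    omega
  refine ⟨hdle, ?_⟩
  have heq : spanPQ n k d 0 = coordSub n (fun m => m < min d (n - k)) := by
    rw [spanPQ_eq]
    exact coordSub_congr (fun m hm => by omega)
  rw [heq]
  exact Submodule.eq_of_le_of_finrank_le hle (by rw [hcard]; omega)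

lemma block_Q (n k : ℕ) (hk : k ≤ n) (W : Submodule ℂ (Fin n → ℂ)) (hW : W ≤ Qmod n k)
    (hinv : Submodule.map (Nmap n k) W ≤ W) :
    finrank ℂ W ≤ k ∧ W = spanPQ n k 0 (finrank ℂ W) := by
  classical
  set d := finrank ℂ W with hd
  have hle : W ≤ coordSub n (fun m => n - k ≤ m ∧ m < n - k + min d k) := by
    intro x hx j hj
    rw [Qmod_eq n k hk] at hW
    by_cases hjk : n - k ≤ j.val
    · have hjn := j.isLt
      exact Npow_support n k d x (nilpotent_bound n k W hinv x hx) j (by omega) (by omega)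
    · exact hW hx j hjk
  have hcard : finrank ℂ (coordSub n (fun m => n - k ≤ m ∧ m < n - k + min d k))
      = min d k := by
    rw [finrank_coordSub]
    have he : (Finset.range n).filter (fun m => n - k ≤ m ∧ m < n - k + min d k)
        = Finset.Ico (n - k) (n - k + min d k) := by
      ext m
      simp only [Finset.mem_filter, Finset.mem_range, Finset.mem_Ico]
      omega
    rw [he, Nat.card_Ico]
    omega
  have hdle : d ≤ k := by
    have h1 := Submodule.finrank_mono hle
    rw [hcard] at h1
    omega
  refine ⟨hdle, ?_⟩
  have heq : spanPQ n k 0 d = coordSub n (fun m => n - k ≤ m ∧ m < n - k + min d k) := by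
    rw [spanPQ_eq]
    exact coordSub_congr (fun m hm => by omega)
  rw [heq]
  exact Submodule.eq_of_le_of_finrank_le hle (by rw [hcard]; omega)

end LimitAux3

section LimitAux4

open Finset

lemma count_succ (n : ℕ) (w : Fin n → Bool) (c : Bool) (i : ℕ) (hi : i < n) :
    (Finset.univ.filter fun j : Fin n => j.val < i + 1 ∧ w j = c).card
      = (Finset.univ.filter fun j : Fin n => j.val < i ∧ w j = c).card
        + (if w ⟨i, hi⟩ = c then 1 else 0) := by
  classical
  have hsplit : (Finset.univ.filter fun j : Fin n => j.val < i + 1 ∧ w j = c)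
      = (Finset.univ.filter fun j : Fin n => j.val < i ∧ w j = c) ∪
        (Finset.univ.filter fun j : Fin n => j = ⟨i, hi⟩ ∧ w j = c) := by
    ext j
    simp only [Finset.mem_filter, Finset.mem_union, Finset.mem_univ, true_and]
    constructor
    · rintro ⟨hj, hw⟩
      rcases Nat.lt_or_ge j.val i with h | h
      · exact Or.inl ⟨h, hw⟩
      · exact Or.inr ⟨Fin.ext (show j.val = i by omega), hw⟩
    · rintro (⟨hj, hw⟩ | ⟨rfl, hw⟩)
      · exact ⟨by omega, hw⟩
      · exact ⟨Nat.lt_succ_self i, hw⟩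
  rw [hsplit, Finset.card_union_of_disjoint]
  · congr 1
    by_cases hw : w ⟨i, hi⟩ = c
    · rw [if_pos hw]
      have he : (Finset.univ.filter fun j : Fin n => j = ⟨i, hi⟩ ∧ w j = c) = {⟨i, hi⟩} := by
        ext j
        simp only [Finset.mem_filter, Finset.mem_univ, true_and, Finset.mem_singleton]
        constructor
        · rintro ⟨rfl, -⟩; rfl
        · rintro rfl; exact ⟨rfl, hw⟩
      rw [he, Finset.card_singleton]
    · rw [if_neg hw]
      have he : (Finset.univ.filter fun j : Fin n => j = ⟨i, hi⟩ ∧ w j = c) = ∅ := by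
        ext j
        simp only [Finset.mem_filter, Finset.mem_univ, true_and, Finset.notMem_empty,
          iff_false, not_and]
        rintro rfl
        exact hw
      rw [he, Finset.card_empty]
  · rw [Finset.disjoint_left]
    rintro j hj1 hj2
    simp only [Finset.mem_filter, Finset.mem_univ, true_and] at hj1 hj2
    rcases hj2 with ⟨rfl, -⟩
    obtain ⟨h1, -⟩ := hj1
    have hv : (⟨i, hi⟩ : Fin n).val = i := rfl
    omega

lemma bcount_succ (n : ℕ) (w : Fin n → Bool) (i : ℕ) (hi : i < n) :
    bcount n w (i + 1) = bcount n w i + (if w ⟨i, hi⟩ = true then 1 else 0) := by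
  simp only [bcount]
  exact count_succ n w true i hi

lemma tcount_succ (n : ℕ) (w : Fin n → Bool) (i : ℕ) (hi : i < n) :
    tcount n w (i + 1) = tcount n w i + (if w ⟨i, hi⟩ = false then 1 else 0) := by
  simp only [tcount]
  exact count_succ n w false i hi

lemma bcount_zero (n : ℕ) (w : Fin n → Bool) : bcount n w 0 = 0 := by
  simp [bcount]

lemma count_split (n : ℕ) (w : Fin n → Bool) (i : ℕ) :
    tcount n w i + bcount n w i = (Finset.univ.filter fun j : Fin n => j.val < i).card := by
  classical
  rw [tcount, bcount, ← Finset.filter_filter, ← Finset.filter_filter]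
  have he : ((Finset.univ.filter fun j : Fin n => j.val < i).filter fun j => w j = true)
      = ((Finset.univ.filter fun j : Fin n => j.val < i).filter fun j => ¬ (w j = false)) := by
    apply Finset.filter_congr
    intro j _
    simp
  rw [he]
  exact Finset.card_filter_add_card_filter_not _

lemma card_lt_val (n i : ℕ) :
    (Finset.univ.filter fun j : Fin n => j.val < i).card = min i n := by
  rw [card_filter_val n (fun m => m < i)]
  have he : (Finset.range n).filter (fun m => m < i) = Finset.range (min i n) := by
    ext m
    simp only [Finset.mem_filter, Finset.mem_range]
    omega
  rw [he, Finset.card_range]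

lemma bcount_mono (n : ℕ) (w : Fin n → Bool) {i i' : ℕ} (h : i ≤ i') :
    bcount n w i ≤ bcount n w i' := by
  apply Finset.card_le_card
  intro j hj
  simp only [Finset.mem_filter, Finset.mem_univ, true_and] at hj ⊢
  exact ⟨by omega, hj.2⟩

lemma tcount_mono (n : ℕ) (w : Fin n → Bool) {i i' : ℕ} (h : i ≤ i') :
    tcount n w i ≤ tcount n w i' := by
  apply Finset.card_le_card
  intro j hj
  simp only [Finset.mem_filter, Finset.mem_univ, true_and] at hj ⊢
  exact ⟨by omega, hj.2⟩

lemma bcount_top (n : ℕ) (w : Fin n → Bool) :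
    bcount n w n = (Finset.univ.filter fun j : Fin n => w j = true).card := by
  rw [bcount]
  congr 1
  ext j
  simp [j.isLt]

lemma spanPQ_inf_Q_rank (n k t b : ℕ) (hk : k ≤ n) (ht : t ≤ n - k) (hb : b ≤ k) :
    finrank ℂ ↥(spanPQ n k t b ⊓ Qmod n k) = b := by
  classical
  have h1 : spanPQ n k t b ⊓ Qmod n k = coordSub n (fun m => n - k ≤ m ∧ m < n - k + b) := by
    rw [spanPQ_eq, Qmod_eq n k hk, coordSub_inf]
    exact coordSub_congr (fun m hm => by omega)
  rw [h1, finrank_coordSub]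
  have he : (Finset.range n).filter (fun m => n - k ≤ m ∧ m < n - k + b)
      = Finset.Ico (n - k) (n - k + b) := by
    ext m
    simp only [Finset.mem_filter, Finset.mem_range, Finset.mem_Ico]
    omega
  rw [he, Nat.card_Ico]
  omega

/-- The weight sequence extracted from the limit flag. -/
noncomputable def limitWeight (n k : ℕ) (F : Fin (n + 1) → Submodule ℂ (Fin n → ℂ)) :
    Fin n → Bool :=
  fun j => decide (finrank ℂ (Submodule.map (projQ n k) (F j.succ))
    = finrank ℂ (Submodule.map (projQ n k) (F j.castSucc)) + 1)

end LimitAux4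


set_option synthInstance.maxHeartbeats 800000
set_option maxHeartbeats 1600000

/-- For every complete `N`-invariant flag `F`, the subspaces
`F' i = (F i ∩ P) + π_Q (F i)` form a torus-fixed complete `N`-invariant flag;
consequently `F' = Φ(w)` for a unique weight sequence `w`. -/
theorem limit_flag_is_fixed (n k : ℕ) (hn : 1 ≤ n) (hkn : 2 * k ≤ n)
    (F : Fin (n + 1) → Submodule ℂ (Fin n → ℂ)) (hF : IsNFlag n k F) :
    IsNFlag n k (fun i => (F i ⊓ Pmod n k) ⊔ Submodule.map (projQ n k) (F i)) ∧
    TorusFixed n k (fun i => (F i ⊓ Pmod n k) ⊔ Submodule.map (projQ n k) (F i)) ∧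
    ∃! w : Fin n → Bool, IsWeightSeq n k w ∧
      (fun i => (F i ⊓ Pmod n k) ⊔ Submodule.map (projQ n k) (F i)) = PhiFlag n k w := by
  classical
  obtain ⟨hmono, hrank, hNF⟩ := hF
  have hk : k ≤ n := by omega
  -- rank sum via rank-nullity for `projQ` restricted to `F i`
  have hsum : ∀ i : Fin (n + 1), finrank ℂ ↥(F i ⊓ Pmod n k)
      + finrank ℂ ↥(Submodule.map (projQ n k) (F i)) = i.val := by
    intro i
    have h1 : Submodule.map (projQ n k) (F i)
        = LinearMap.range ((projQ n k) ∘ₗ (F i).subtype) := by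
      rw [LinearMap.range_comp, Submodule.range_subtype]
    have h2 : LinearMap.ker ((projQ n k) ∘ₗ (F i).subtype)
        = Submodule.comap (F i).subtype (F i ⊓ Pmod n k) := by
      rw [LinearMap.ker_comp, ker_projQ]
      ext y
      simp only [Submodule.mem_comap, Submodule.subtype_apply, Submodule.mem_inf]
      exact ⟨fun h => ⟨y.2, h⟩, fun h => h.2⟩
    have h3 := LinearMap.finrank_range_add_finrank_ker ((projQ n k) ∘ₗ (F i).subtype)
    have h4 : finrank ℂ ↥(Submodule.comap (F i).subtype (F i ⊓ Pmod n k))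
        = finrank ℂ ↥(F i ⊓ Pmod n k) :=
      (Submodule.comapSubtypeEquivOfLe (inf_le_left : F i ⊓ Pmod n k ≤ F i)).finrank_eq
    rw [← h1, h2, h4, hrank i] at h3
    omega
  have hFself : ∀ i, Submodule.map (Nmap n k) (F i) ≤ F i := by
    intro i
    rcases Nat.eq_zero_or_pos i.val with h0 | hpos
    · have hbot : F i = ⊥ := by
        have h1 := hrank i
        rw [h0] at h1
        exact Submodule.finrank_eq_zero.mp h1
      rw [hbot, Submodule.map_bot]
    · have hmn : i.val - 1 < n := by have := i.isLt; omega
      have h1 : i = (⟨i.val - 1, hmn⟩ : Fin n).succ :=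
        Fin.ext (show i.val = i.val - 1 + 1 by omega)
      rw [h1]
      exact le_trans (hNF ⟨i.val - 1, hmn⟩)
        (hmono (le_of_lt (Fin.castSucc_lt_succ : (⟨i.val - 1, hmn⟩ : Fin n).castSucc < (⟨i.val - 1, hmn⟩ : Fin n).succ)))
  have hAinv : ∀ i, Submodule.map (Nmap n k) (F i ⊓ Pmod n k) ≤ F i ⊓ Pmod n k := fun i =>
    le_trans (Submodule.map_inf_le _) (inf_le_inf (hFself i) (map_Nmap_Pmod_le n k))
  have hBinv : ∀ i, Submodule.map (Nmap n k) (Submodule.map (projQ n k) (F i))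
      ≤ Submodule.map (projQ n k) (F i) := by
    intro i
    rw [map_swap]
    exact Submodule.map_mono (hFself i)
  have hAstruct := fun i => block_P n k (F i ⊓ Pmod n k) inf_le_right (hAinv i)
  have hBstruct := fun i => block_Q n k hk (Submodule.map (projQ n k) (F i))
    (map_projQ_le_Qmod n k hk (F i)) (hBinv i)
  have hF' : ∀ i : Fin (n + 1), (F i ⊓ Pmod n k) ⊔ Submodule.map (projQ n k) (F i)
      = spanPQ n k (finrank ℂ ↥(F i ⊓ Pmod n k))
        (finrank ℂ ↥(Submodule.map (projQ n k) (F i))) := by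
    intro i
    conv_lhs => rw [(hAstruct i).2, (hBstruct i).2]
    exact spanPQ_sup n k _ _
  have hPQ : Pmod n k ⊓ Qmod n k = ⊥ := by
    rw [Pmod_eq, Qmod_eq n k hk, coordSub_inf]
    apply le_antisymm _ bot_le
    intro x hx
    rw [Submodule.mem_bot]
    funext j
    exact hx j (by omega)
  have hdisj : ∀ i, (F i ⊓ Pmod n k) ⊓ (Submodule.map (projQ n k) (F i)) = ⊥ := fun i =>
    le_bot_iff.mp (le_trans (inf_le_inf inf_le_right (map_projQ_le_Qmod n k hk (F i))) hPQ.le)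
  have hrank' : ∀ i : Fin (n + 1),
      finrank ℂ ↥((F i ⊓ Pmod n k) ⊔ Submodule.map (projQ n k) (F i)) = i.val := by
    intro i
    have h1 := Submodule.finrank_sup_add_finrank_inf_eq (F i ⊓ Pmod n k)
      (Submodule.map (projQ n k) (F i))
    rw [hdisj i, finrank_bot] at h1
    have h2 := hsum i
    omega
  have hstep : ∀ j : Fin n,
      finrank ℂ ↥(Submodule.map (projQ n k) (F j.succ))
        = finrank ℂ ↥(Submodule.map (projQ n k) (F j.castSucc)) ∨
      finrank ℂ ↥(Submodule.map (projQ n k) (F j.succ))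
        = finrank ℂ ↥(Submodule.map (projQ n k) (F j.castSucc)) + 1 := by
    intro j
    have h1 := hsum j.castSucc
    have h2 := hsum j.succ
    have h3 : finrank ℂ ↥(F j.castSucc ⊓ Pmod n k) ≤ finrank ℂ ↥(F j.succ ⊓ Pmod n k) :=
      Submodule.finrank_mono
        (inf_le_inf_right _ (hmono (le_of_lt (Fin.castSucc_lt_succ : j.castSucc < j.succ))))
    have h4 : finrank ℂ ↥(Submodule.map (projQ n k) (F j.castSucc))
        ≤ finrank ℂ ↥(Submodule.map (projQ n k) (F j.succ)) :=
      Submodule.finrank_mono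
        (Submodule.map_mono (hmono (le_of_lt (Fin.castSucc_lt_succ : j.castSucc < j.succ))))
    rw [Fin.coe_castSucc] at h1
    rw [Fin.val_succ] at h2
    omega
  have hwtrue : ∀ j : Fin n, limitWeight n k F j = true ↔
      finrank ℂ ↥(Submodule.map (projQ n k) (F j.succ))
        = finrank ℂ ↥(Submodule.map (projQ n k) (F j.castSucc)) + 1 := by
    intro j
    simp only [limitWeight, decide_eq_true_eq]
  have hbc : ∀ i : Fin (n + 1), bcount n (limitWeight n k F) i.val
      = finrank ℂ ↥(Submodule.map (projQ n k) (F i)) := by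
    intro i
    induction i using Fin.induction with
    | zero =>
        have h1 := hsum 0
        rw [Fin.val_zero] at h1 ⊢
        rw [bcount_zero]
        omega
    | succ j ih =>
        rw [Fin.coe_castSucc] at ih
        rw [Fin.val_succ, bcount_succ n _ j.val j.isLt, ih, Fin.eta]
        rcases hstep j with h | h
        · have hw : ¬ limitWeight n k F j = true := by
            rw [hwtrue j]; omega
          rw [if_neg hw]
          omega
        · have hw : limitWeight n k F j = true := (hwtrue j).mpr h
          rw [if_pos hw]
          omega
  have htc : ∀ i : Fin (n + 1), tcount n (limitWeight n k F) i.val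
      = finrank ℂ ↥(F i ⊓ Pmod n k) := by
    intro i
    have h1 := count_split n (limitWeight n k F) i.val
    rw [card_lt_val] at h1
    have h2 := hbc i
    have h3 := hsum i
    have h4 := i.isLt
    omega
  have hwseq : IsWeightSeq n k (limitWeight n k F) := by
    rw [IsWeightSeq, ← bcount_top]
    have h2 := hbc (Fin.last n)
    rw [Fin.val_last] at h2
    rw [h2]
    have h3 := hsum (Fin.last n)
    rw [Fin.val_last] at h3
    have h4 := (hAstruct (Fin.last n)).1
    have h5 := (hBstruct (Fin.last n)).1
    omega
  have hphi : (fun i => (F i ⊓ Pmod n k) ⊔ Submodule.map (projQ n k) (F i))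
      = PhiFlag n k (limitWeight n k F) := by
    funext i
    simp only [PhiFlag]
    rw [hF' i, htc i, hbc i]
  refine ⟨⟨?_, ?_, ?_⟩, ?_, ?_⟩
  · -- Monotone
    intro i j hij
    exact sup_le_sup (inf_le_inf_right _ (hmono hij)) (Submodule.map_mono (hmono hij))
  · -- ranks
    intro i
    exact hrank' i
  · -- N-invariance
    intro i
    show Submodule.map (Nmap n k)
        ((F i.succ ⊓ Pmod n k) ⊔ Submodule.map (projQ n k) (F i.succ))
      ≤ (F i.castSucc ⊓ Pmod n k) ⊔ Submodule.map (projQ n k) (F i.castSucc)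
    rw [Submodule.map_sup]
    apply sup_le
    · exact le_trans
        (le_trans (Submodule.map_inf_le _) (inf_le_inf (hNF i) (map_Nmap_Pmod_le n k)))
        le_sup_left
    · rw [map_swap]
      exact le_trans (Submodule.map_mono (hNF i)) le_sup_right
  · -- TorusFixed
    intro i
    exact le_antisymm
      (sup_le (le_trans (le_inf le_sup_left inf_le_right) le_sup_left)
        (le_trans (le_inf le_sup_right (map_projQ_le_Qmod n k hk (F i))) le_sup_right))
      (sup_le inf_le_left inf_le_left)
  · -- existence and uniqueness
    refine ⟨limitWeight n k F, ⟨hwseq, hphi⟩, ?_⟩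
    intro w' hw'
    obtain ⟨hw'seq, hw'eq⟩ := hw'
    have hW'b : ∀ i : Fin (n + 1), bcount n w' i.val
        = finrank ℂ ↥(Submodule.map (projQ n k) (F i)) := by
      intro i
      have hEq : spanPQ n k (finrank ℂ ↥(F i ⊓ Pmod n k))
          (finrank ℂ ↥(Submodule.map (projQ n k) (F i)))
          = spanPQ n k (tcount n w' i.val) (bcount n w' i.val) := by
        have h0 := congrFun hw'eq i
        rw [hF' i] at h0
        simpa only [PhiFlag] using h0
      have hbn' : bcount n w' n = k := by rw [bcount_top]; exact hw'seq
      have hb' : bcount n w' i.val ≤ k := by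
        have h1 := bcount_mono n w' (show i.val ≤ n by have := i.isLt; omega)
        omega
      have htn' : tcount n w' i.val ≤ n - k := by
        have h1 := count_split n w' n
        rw [card_lt_val] at h1
        have h2 := tcount_mono n w' (show i.val ≤ n by have := i.isLt; omega)
        omega
      have e1 := spanPQ_inf_Q_rank n k _ _ hk htn' hb'
      have e2 := spanPQ_inf_Q_rank n k _ _ hk (hAstruct i).1 (hBstruct i).1
      rw [← hEq] at e1
      rw [e2] at e1
      exact e1.symm
    funext j
    have h1 := hW'b j.castSucc
    have h2 := hW'b j.succ
    have h3 := hbc j.castSucc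
    have h4 := hbc j.succ
    rw [Fin.coe_castSucc] at h1 h3
    rw [Fin.val_succ] at h2 h4
    have h5 := bcount_succ n w' j.val j.isLt
    have h6 := bcount_succ n (limitWeight n k F) j.val j.isLt
    rw [Fin.eta] at h5 h6
    rcases Bool.eq_false_or_eq_true (w' j) with hwj' | hwj' <;>
      rcases Bool.eq_false_or_eq_true (limitWeight n k F j) with hwj | hwj <;>
      rw [hwj', hwj] <;> exfalso <;> rw [hwj'] at h5 <;> rw [hwj] at h6 <;>
      simp at h5 h6 <;> omega


end Springer
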